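/- The disagreement probabilities of the noisy voter model satisfy the master equation: for every vertex x ∈ V(G) and every t ≥ 0, d/dt P(Z_t(x)=1) = −(2δ/(2δ+1))·P(Z_t(x)=1) − (1/(2δ+1))·(1/d(x))·Σ_{u ~ x} P(Z_t(x)=1, Z_t(u)=0) + (1/(2δ+1))·(1/d(x))·Σ_{u ~ x} P(Z_t(x)=0, Z_t(u)=1). -/

import Mathlib

open Finset

/-- Flip rate of the disagreement chain of the noisy voter model at vertex `v` in
configuration `η`: `(2δ/(2δ+1))·1{η(v)=1} + (1/(2δ+1))·(1/d(v))·#{u ~ v : η(u) ≠ η(v)}`. -/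
noncomputable def dzRate {V : Type*} [Fintype V] (G : SimpleGraph V) [DecidableRel G.Adj]
    (δ : ℝ) (v : V) (η : V → Bool) : ℝ :=
  (2 * δ / (2 * δ + 1)) * (if η v = true then 1 else 0) +
    (1 / (2 * δ + 1)) * (1 / (G.degree v : ℝ)) *
      ((Finset.univ.filter fun u => G.Adj v u ∧ η u ≠ η v).card : ℝ)

/-- The rate matrix of the disagreement chain: single-spin flips occur at rate `dzRate`,
transitions changing two or more spins have rate `0`, and diagonal entries make rows sum to `0`. -/
noncomputable def dzQ {V : Type*} [Fintype V] [DecidableEq V] (G : SimpleGraph V)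
    [DecidableRel G.Adj] (δ : ℝ) : Matrix (V → Bool) (V → Bool) ℝ := fun η η' =>
  if η = η' then -∑ v, dzRate G δ v η
  else if (Finset.univ.filter fun v => η v ≠ η' v).card = 1 then
    ∑ v ∈ Finset.univ.filter (fun v => η v ≠ η' v), dzRate G δ v η
  else 0

/-- `P(Z_t(v) = 1)`: the probability that the disagreement chain started from the all-ones
configuration has a disagreement (spin `1`) at vertex `v` at time `t`. -/
noncomputable def probDisagree {V : Type*} [Fintype V] [DecidableEq V] (G : SimpleGraph V)
    [DecidableRel G.Adj] (δ : ℝ) (t : ℝ) (v : V) : ℝ :=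
  ∑ η ∈ Finset.univ.filter (fun η : V → Bool => η v = true),
    NormedSpace.exp (t • dzQ G δ) (fun _ => true) η

/-- `P(Z_t(x) = a, Z_t(u) = b)`: the joint probability that the disagreement chain started
from the all-ones configuration takes value `a` at `x` and `b` at `u` at time `t`. -/
noncomputable def probDisagree₂ {V : Type*} [Fintype V] [DecidableEq V] (G : SimpleGraph V)
    [DecidableRel G.Adj] (δ : ℝ) (t : ℝ) (x : V) (a : Bool) (u : V) (b : Bool) : ℝ :=
  ∑ η ∈ Finset.univ.filter (fun η : V → Bool => η x = a ∧ η u = b),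
    NormedSpace.exp (t • dzQ G δ) (fun _ => true) η

section Aux
variable {V : Type*} [Fintype V] [DecidableEq V]

private lemma flip_diff (κ : V → Bool) (v : V) :
    (Finset.univ.filter fun w => κ w ≠ Function.update κ v (!(κ v)) w) = {v} := by
  ext w
  by_cases h : w = v <;> simp [Function.update_apply, h]

private lemma hasDerivAt_exp_entry (A : Matrix (V → Bool) (V → Bool) ℝ)
    (t : ℝ) (i j : V → Bool) :
    HasDerivAt (fun s : ℝ => NormedSpace.exp (s • A) i j)
      ((NormedSpace.exp (t • A) * A) i j) t := by
  letI : NormedRing (Matrix (V → Bool) (V → Bool) ℝ) := Matrix.linftyOpNormedRing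
  letI : NormedAlgebra ℝ (Matrix (V → Bool) (V → Bool) ℝ) := Matrix.linftyOpNormedAlgebra
  have h := hasDerivAt_exp_smul_const (𝕂 := ℝ) A t
  exact ((LinearMap.toContinuousLinearMap
      (((LinearMap.proj j).comp ((LinearMap.proj i) : _ →ₗ[ℝ] ((V → Bool) → ℝ))) :
        Matrix (V → Bool) (V → Bool) ℝ →ₗ[ℝ] ℝ)).hasFDerivAt.comp_hasDerivAt t h :)

variable (G : SimpleGraph V) [DecidableRel G.Adj] (δ : ℝ)

private lemma dzQ_apply (κ η : V → Bool) :
    dzQ G δ κ η = (if η = κ then -∑ v, dzRate G δ v κ else 0)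
      + ∑ v, (if η = Function.update κ v (!(κ v)) then dzRate G δ v κ else 0) := by
  rcases eq_or_ne κ η with rfl | hne
  · have h2 : ∑ v, (if κ = Function.update κ v (!(κ v)) then dzRate G δ v κ else 0) = 0 := by
      refine Finset.sum_eq_zero fun v _ => if_neg fun h => ?_
      have := congrFun h v
      simp [Function.update_self] at this
    rw [dzQ, if_pos rfl, if_pos rfl, h2, add_zero]
  · rw [dzQ, if_neg hne, if_neg (Ne.symm hne)]
    by_cases hc : (Finset.univ.filter fun v => κ v ≠ η v).card = 1
    · rw [if_pos hc]
      obtain ⟨v0, hv0⟩ := Finset.card_eq_one.mp hc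
      have hmem : ∀ w, κ w ≠ η w ↔ w = v0 := by
        intro w
        rw [← Finset.mem_singleton, ← hv0, Finset.mem_filter]
        simp
      have hηv : η = Function.update κ v0 (!(κ v0)) := by
        funext w
        by_cases hw : w = v0
        · subst hw
          have h1 : κ w ≠ η w := (hmem w).2 rfl
          rw [Function.update_self]
          cases hκ : κ w <;> cases hη : η w <;> simp_all
        · have h1 : ¬ (κ w ≠ η w) := fun hcc => hw ((hmem w).1 hcc)
          push_neg at h1
          simp [Function.update_apply, hw, h1.symm]
      rw [hv0, Finset.sum_singleton, zero_add]
      rw [Finset.sum_eq_single v0]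
      · rw [if_pos hηv]
      · intro v _ hv
        rw [if_neg]
        intro h
        have h2 := flip_diff κ v
        rw [← h, hv0] at h2
        exact hv (Finset.singleton_injective h2.symm)
      · simp
    · rw [if_neg hc, zero_add]
      refine (Finset.sum_eq_zero fun v _ => ?_).symm
      rw [if_neg]
      intro h
      apply hc
      rw [h, flip_diff]
      exact Finset.card_singleton v

private lemma dzQ_col_sum (x : V) (κ : V → Bool) :
    ∑ η ∈ Finset.univ.filter (fun η : V → Bool => η x = true), dzQ G δ κ η
      = if κ x = true then -(dzRate G δ x κ) else dzRate G δ x κ := by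
  rw [Finset.sum_congr rfl (fun η _ => dzQ_apply G δ κ η), Finset.sum_add_distrib,
    Finset.sum_ite_eq', Finset.sum_comm]
  rw [Finset.sum_congr rfl (fun v _ => Finset.sum_ite_eq' _ _ _)]
  simp only [Finset.mem_filter, Finset.mem_univ, true_and, Function.update_apply]
  by_cases hx : κ x = true
  · rw [if_pos hx, if_pos hx]
    have hterm : ∀ v ∈ (Finset.univ : Finset V),
        (if (if x = v then !(κ v) else κ x) = true then dzRate G δ v κ else 0)
          = dzRate G δ v κ - (if v = x then dzRate G δ v κ else 0) := by
      intro v _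
      by_cases hv : x = v
      · simp [← hv, hx]
      · rw [if_neg hv, if_pos hx, if_neg (fun h => hv h.symm), sub_zero]
    rw [Finset.sum_congr rfl hterm, Finset.sum_sub_distrib,
      Finset.sum_ite_eq' Finset.univ x (fun v => dzRate G δ v κ), if_pos (Finset.mem_univ x)]
    ring
  · rw [if_neg hx, if_neg hx, zero_add]
    have hx' : κ x = false := by simpa using hx
    have hterm : ∀ v ∈ (Finset.univ : Finset V),
        (if (if x = v then !(κ v) else κ x) = true then dzRate G δ v κ else 0)
          = (if v = x then dzRate G δ v κ else 0) := by
      intro v _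
      by_cases hv : x = v
      · simp [← hv, hx']
      · rw [if_neg hv, hx', if_neg (fun h : v = x => hv h.symm)]
        simp
    rw [Finset.sum_congr rfl hterm,
      Finset.sum_ite_eq' Finset.univ x (fun v => dzRate G δ v κ), if_pos (Finset.mem_univ x)]


private lemma dzRate_apply (G : SimpleGraph V) [DecidableRel G.Adj] (δ : ℝ) (x : V)
    (κ : V → Bool) :
    dzRate G δ x κ = (2 * δ / (2 * δ + 1)) * (if κ x = true then 1 else 0)
      + (1 / (2 * δ + 1)) * (1 / (G.degree x : ℝ)) *
        ∑ u ∈ G.neighborFinset x, (if κ u ≠ κ x then (1 : ℝ) else 0) := by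
  rw [dzRate]
  congr 1
  have h1 : (Finset.univ.filter fun u => G.Adj x u ∧ κ u ≠ κ x)
      = (G.neighborFinset x).filter fun u => κ u ≠ κ x := by
    ext u
    simp [SimpleGraph.mem_neighborFinset]
  rw [h1, Finset.card_filter]
  push_cast [apply_ite (Nat.cast : ℕ → ℝ)]
  ring

noncomputable def probDisagree' (G : SimpleGraph V) [DecidableRel G.Adj] (δ t : ℝ) (v : V) : ℝ :=
  ∑ η ∈ Finset.univ.filter (fun η : V → Bool => η v = true),
    NormedSpace.exp (t • dzQ G δ) (fun _ => true) η

theorem master_eq' (δ : ℝ) (G : SimpleGraph V) [DecidableRel G.Adj]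
    (x : V) (t : ℝ) :
    HasDerivAt (fun s => probDisagree' G δ s x)
      (-(2 * δ / (2 * δ + 1)) * probDisagree' G δ t x
        - (1 / (2 * δ + 1)) * (1 / (G.degree x : ℝ)) *
            ∑ u ∈ G.neighborFinset x,
              (∑ η ∈ Finset.univ.filter (fun η : V → Bool => η x = true ∧ η u = false),
                NormedSpace.exp (t • dzQ G δ) (fun _ => true) η)
        + (1 / (2 * δ + 1)) * (1 / (G.degree x : ℝ)) *
            ∑ u ∈ G.neighborFinset x,
              (∑ η ∈ Finset.univ.filter (fun η : V → Bool => η x = false ∧ η u = true),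
                NormedSpace.exp (t • dzQ G δ) (fun _ => true) η)) t := by
  classical
  set Q := dzQ G δ with hQdef
  set p : (V → Bool) → ℝ := fun κ => NormedSpace.exp (t • Q) (fun _ => true) κ with hp
  have hder : HasDerivAt (fun s => probDisagree' G δ s x)
      (∑ η ∈ Finset.univ.filter (fun η : V → Bool => η x = true),
        (NormedSpace.exp (t • Q) * Q) (fun _ => true) η) t :=
    HasDerivAt.fun_sum fun η _ => hasDerivAt_exp_entry Q t _ η
  have hval : (∑ η ∈ Finset.univ.filter (fun η : V → Bool => η x = true),
      (NormedSpace.exp (t • Q) * Q) (fun _ => true) η)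
      = -(2 * δ / (2 * δ + 1)) * probDisagree' G δ t x
        - (1 / (2 * δ + 1)) * (1 / (G.degree x : ℝ)) *
            ∑ u ∈ G.neighborFinset x,
              (∑ η ∈ Finset.univ.filter (fun η : V → Bool => η x = true ∧ η u = false), p η)
        + (1 / (2 * δ + 1)) * (1 / (G.degree x : ℝ)) *
            ∑ u ∈ G.neighborFinset x,
              (∑ η ∈ Finset.univ.filter (fun η : V → Bool => η x = false ∧ η u = true), p η) := by
    have step1 : (∑ η ∈ Finset.univ.filter (fun η : V → Bool => η x = true),
        (NormedSpace.exp (t • Q) * Q) (fun _ => true) η)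
        = ∑ κ, p κ * (if κ x = true then -(dzRate G δ x κ) else dzRate G δ x κ) := by
      rw [Finset.sum_congr rfl (fun η _ => Matrix.mul_apply), Finset.sum_comm]
      exact Finset.sum_congr rfl fun κ _ => by
        rw [← Finset.mul_sum, hQdef, dzQ_col_sum]
    have pointwise : ∀ κ : V → Bool,
        p κ * (if κ x = true then -(dzRate G δ x κ) else dzRate G δ x κ)
        = -(2 * δ / (2 * δ + 1)) * (if κ x = true then p κ else 0)
          - (1 / (2 * δ + 1)) * (1 / (G.degree x : ℝ)) *
              ∑ u ∈ G.neighborFinset x, (if κ x = true ∧ κ u = false then p κ else 0)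
          + (1 / (2 * δ + 1)) * (1 / (G.degree x : ℝ)) *
              ∑ u ∈ G.neighborFinset x, (if κ x = false ∧ κ u = true then p κ else 0) := by
      intro κ
      rw [dzRate_apply]
      by_cases hx : κ x = true
      · have e1 : ∑ u ∈ G.neighborFinset x, (if κ x = true ∧ κ u = false then p κ else 0)
            = p κ * ∑ u ∈ G.neighborFinset x, (if κ u ≠ κ x then (1 : ℝ) else 0) := by
          rw [Finset.mul_sum]
          refine Finset.sum_congr rfl fun u _ => ?_
          rw [hx]
          cases hκu : κ u <;> simp
        have e2 : ∑ u ∈ G.neighborFinset x, (if κ x = false ∧ κ u = true then p κ else 0)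
            = 0 := Finset.sum_eq_zero fun u _ => by simp [hx]
        rw [if_pos hx, if_pos hx, if_pos hx, e1, e2]
        ring
      · have hx' : κ x = false := by simpa using hx
        have e1 : ∑ u ∈ G.neighborFinset x, (if κ x = true ∧ κ u = false then p κ else 0)
            = 0 := Finset.sum_eq_zero fun u _ => by simp [hx]
        have e2 : ∑ u ∈ G.neighborFinset x, (if κ x = false ∧ κ u = true then p κ else 0)
            = p κ * ∑ u ∈ G.neighborFinset x, (if κ u ≠ κ x then (1 : ℝ) else 0) := by
          rw [Finset.mul_sum]
          refine Finset.sum_congr rfl fun u _ => ?_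
          rw [hx']
          cases hκu : κ u <;> simp
        rw [if_neg hx, if_neg hx, if_neg hx, e1, e2]
        ring
    rw [step1, Finset.sum_congr rfl (fun κ _ => pointwise κ)]
    have hP : probDisagree' G δ t x = ∑ κ, (if κ x = true then p κ else 0) := by
      rw [probDisagree', Finset.sum_filter]
    have hP2 : ∀ (a b : Bool) (u : V),
        (∑ η ∈ Finset.univ.filter (fun η : V → Bool => η x = a ∧ η u = b), p η)
        = ∑ κ, (if κ x = a ∧ κ u = b then p κ else 0) := by
      intro a b u
      rw [Finset.sum_filter]
    rw [hP]
    rw [Finset.sum_congr rfl (fun u _ => hP2 true false u),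
      Finset.sum_congr rfl (fun u _ => hP2 false true u)]
    rw [Finset.sum_add_distrib, Finset.sum_sub_distrib]
    congr 1
    congr 1
    · rw [Finset.mul_sum]
    · rw [Finset.sum_comm, Finset.mul_sum]
    · rw [Finset.sum_comm, Finset.mul_sum]
  rw [← hval]
  exact hder

end Aux

/-- The master equation for the disagreement probabilities of the noisy voter model:
`d/dt P(Z_t(x)=1) = −(2δ/(2δ+1))·P(Z_t(x)=1)
  − (1/(2δ+1))·(1/d(x))·Σ_{u ~ x} P(Z_t(x)=1, Z_t(u)=0)
  + (1/(2δ+1))·(1/d(x))·Σ_{u ~ x} P(Z_t(x)=0, Z_t(u)=1)`. -/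
theorem disagreement_master_equation
    {V : Type*} [Fintype V] [DecidableEq V] (δ : ℝ) (hδ : 0 < δ)
    (G : SimpleGraph V) [DecidableRel G.Adj] (hdeg : ∀ v, 1 ≤ G.degree v)
    (x : V) (t : ℝ) (ht : 0 ≤ t) :
    HasDerivAt (fun s => probDisagree G δ s x)
      (-(2 * δ / (2 * δ + 1)) * probDisagree G δ t x
        - (1 / (2 * δ + 1)) * (1 / (G.degree x : ℝ)) *
            ∑ u ∈ G.neighborFinset x, probDisagree₂ G δ t x true u false
        + (1 / (2 * δ + 1)) * (1 / (G.degree x : ℝ)) *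
            ∑ u ∈ G.neighborFinset x, probDisagree₂ G δ t x false u true) t := by
  exact master_eq' δ G x t
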